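/- De-focalization (soundness of focusing): if the sequent Γ ; L ⊢ U is derivable in the focused sequent calculus for polarized intuitionistic logic (in any of the three forms), then the sequent (Γ)⊛ ; (L)⊛ ⊢ (U)⊛ is derivable in the unfocused sequent calculus G3 for intuitionistic propositional logic extended with an ordered auxiliary context Ψ, where the Ψ-sequent Γ; Ψ ⊢ Q is defined by rules cons (Γ, P; Ψ ⊢ Q implies Γ; P, Ψ ⊢ Q) and nil (Γ ⊢ Q implies Γ; · ⊢ Q). In particular, if U is stable and Γ, U are suspension-normal, Γ ; · ⊢ U implies (Γ)⊛ ⊢ (U)⊛ in G3. -/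

import Mathlib

namespace StructuralFocalization

/- Polarized propositional intuitionistic logic -/
mutual
inductive PProp : Type
  | atom : Nat → PProp
  | down : NProp → PProp
  | bot  : PProp
  | or   : PProp → PProp → PProp
  | top  : PProp
  | and  : PProp → PProp → PProp
inductive NProp : Type
  | atom : Nat → NProp
  | up   : PProp → NProp
  | imp  : PProp → NProp → NProp
  | top  : NProp
  | and  : NProp → NProp → NProp
end

/- Hypotheses: negative propositions or suspended positives ⟨A⁺⟩ -/
inductive Hyp : Type
  | neg  : NProp → Hyp
  | susp : PProp → Hyp

/- Succedents: A⁺, A⁻, or suspended ⟨A⁻⟩ -/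
inductive Succ : Type
  | pos  : PProp → Succ
  | neg  : NProp → Succ
  | susp : NProp → Succ

abbrev Ctx := List Hyp

def Succ.stable : Succ → Prop
  | .pos _ => True
  | .susp _ => True
  | .neg _ => False

def Hyp.suspNormal : Hyp → Prop
  | .susp (PProp.atom _) => True
  | .susp _ => False
  | .neg _ => True

def Ctx.suspNormal (Γ : Ctx) : Prop := ∀ h ∈ Γ, h.suspNormal

def Succ.suspNormal : Succ → Prop
  | .susp (NProp.atom _) => True
  | .susp _ => False
  | _ => True

/- The focused sequent calculus (Figures 3 and 4 of "Structural focalization",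
   with the generalized id⁺/id⁻ rules for arbitrary suspended propositions). -/
mutual
/-- Right focus: Γ ⊢ [A⁺] -/
inductive RFoc : Ctx → PProp → Prop
  | idP {Γ A} : Hyp.susp A ∈ Γ → RFoc Γ A
  | downR {Γ A} : Inv Γ [] (Succ.neg A) → RFoc Γ (PProp.down A)
  | orR1 {Γ A B} : RFoc Γ A → RFoc Γ (PProp.or A B)
  | orR2 {Γ A B} : RFoc Γ B → RFoc Γ (PProp.or A B)
  | topR {Γ} : RFoc Γ PProp.top
  | andR {Γ A B} : RFoc Γ A → RFoc Γ B → RFoc Γ (PProp.and A B)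
/-- Inversion: Γ ; Ω ⊢ U -/
inductive Inv : Ctx → List PProp → Succ → Prop
  | focR {Γ A} : RFoc Γ A → Inv Γ [] (Succ.pos A)
  | focL {Γ A U} : Hyp.neg A ∈ Γ → Succ.stable U → LFoc Γ A U → Inv Γ [] U
  | etaP {Γ p Ω U} : Inv (Hyp.susp (PProp.atom p) :: Γ) Ω U → Inv Γ (PProp.atom p :: Ω) U
  | downL {Γ A Ω U} : Inv (Hyp.neg A :: Γ) Ω U → Inv Γ (PProp.down A :: Ω) U
  | botL {Γ Ω U} : Inv Γ (PProp.bot :: Ω) U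
  | orL {Γ A B Ω U} : Inv Γ (A :: Ω) U → Inv Γ (B :: Ω) U → Inv Γ (PProp.or A B :: Ω) U
  | topPL {Γ Ω U} : Inv Γ Ω U → Inv Γ (PProp.top :: Ω) U
  | andPL {Γ A B Ω U} : Inv Γ (A :: B :: Ω) U → Inv Γ (PProp.and A B :: Ω) U
  | etaN {Γ p} : Inv Γ [] (Succ.susp (NProp.atom p)) → Inv Γ [] (Succ.neg (NProp.atom p))
  | upR {Γ A} : Inv Γ [] (Succ.pos A) → Inv Γ [] (Succ.neg (NProp.up A))
  | impR {Γ A B} : Inv Γ [A] (Succ.neg B) → Inv Γ [] (Succ.neg (NProp.imp A B))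
  | topNR {Γ} : Inv Γ [] (Succ.neg NProp.top)
  | andNR {Γ A B} : Inv Γ [] (Succ.neg A) → Inv Γ [] (Succ.neg B) →
      Inv Γ [] (Succ.neg (NProp.and A B))
/-- Left focus: Γ ; [A⁻] ⊢ U -/
inductive LFoc : Ctx → NProp → Succ → Prop
  | idN {Γ A} : LFoc Γ A (Succ.susp A)
  | upL {Γ A U} : Inv Γ [A] U → LFoc Γ (NProp.up A) U
  | impL {Γ A B U} : RFoc Γ A → LFoc Γ B U → LFoc Γ (NProp.imp A B) U
  | andL1 {Γ A B U} : LFoc Γ A U → LFoc Γ (NProp.and A B) U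
  | andL2 {Γ A B U} : LFoc Γ B U → LFoc Γ (NProp.and A B) U
end

/- Unpolarized propositions and Kleene's G3 -/
inductive UProp : Type
  | atom : Nat → UProp
  | bot  : UProp
  | or   : UProp → UProp → UProp
  | top  : UProp
  | and  : UProp → UProp → UProp
  | imp  : UProp → UProp → UProp

inductive G3 : List UProp → UProp → Prop
  | init {Γ p} : UProp.atom p ∈ Γ → G3 Γ (UProp.atom p)
  | botL {Γ Q} : UProp.bot ∈ Γ → G3 Γ Q
  | orR1 {Γ A B} : G3 Γ A → G3 Γ (UProp.or A B)
  | orR2 {Γ A B} : G3 Γ B → G3 Γ (UProp.or A B)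
  | orL {Γ A B Q} : UProp.or A B ∈ Γ → G3 (A :: Γ) Q → G3 (B :: Γ) Q → G3 Γ Q
  | topR {Γ} : G3 Γ UProp.top
  | andR {Γ A B} : G3 Γ A → G3 Γ B → G3 Γ (UProp.and A B)
  | andL1 {Γ A B Q} : UProp.and A B ∈ Γ → G3 (A :: Γ) Q → G3 Γ Q
  | andL2 {Γ A B Q} : UProp.and A B ∈ Γ → G3 (B :: Γ) Q → G3 Γ Q
  | impR {Γ A B} : G3 (A :: Γ) B → G3 Γ (UProp.imp A B)
  | impL {Γ A B Q} : UProp.imp A B ∈ Γ → G3 Γ A → G3 (B :: Γ) Q → G3 Γ Q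

/-- G3 with an ordered auxiliary context Ψ: Γ; Ψ ⊢ Q -/
inductive G3Psi : List UProp → List UProp → UProp → Prop
  | cons {Γ P Ψ Q} : G3Psi (P :: Γ) Ψ Q → G3Psi Γ (P :: Ψ) Q
  | nil {Γ Q} : G3 Γ Q → G3Psi Γ [] Q

/- Erasure -/
mutual
def eraseP : PProp → UProp
  | .atom p => .atom p
  | .down A => eraseN A
  | .bot => .bot
  | .or A B => .or (eraseP A) (eraseP B)
  | .top => .top
  | .and A B => .and (eraseP A) (eraseP B)
def eraseN : NProp → UProp
  | .atom p => .atom p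
  | .up A => eraseP A
  | .imp A B => .imp (eraseP A) (eraseN B)
  | .top => .top
  | .and A B => .and (eraseN A) (eraseN B)
end

def eraseHyp : Hyp → UProp
  | .neg A => eraseN A
  | .susp A => eraseP A

def eraseCtx (Γ : Ctx) : List UProp := Γ.map eraseHyp

def eraseSucc : Succ → UProp
  | .pos A => eraseP A
  | .neg A => eraseN A
  | .susp A => eraseN A

/- ===== Auxiliary lemmas ===== -/

theorem g3_weak {Γ : List UProp} {Q : UProp} (h : G3 Γ Q) :
    ∀ {Δ : List UProp}, (∀ x ∈ Γ, x ∈ Δ) → G3 Δ Q := by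
  induction h with
  | init m => intro Δ s; exact G3.init (s _ m)
  | botL m => intro Δ s; exact G3.botL (s _ m)
  | orR1 _ ih => intro Δ s; exact G3.orR1 (ih s)
  | orR2 _ ih => intro Δ s; exact G3.orR2 (ih s)
  | orL m _ _ ih1 ih2 =>
      intro Δ s
      exact G3.orL (s _ m) (ih1 (by intro x hx; simp only [List.mem_cons, List.mem_append] at hx ⊢; tauto))
        (ih2 (by intro x hx; simp only [List.mem_cons, List.mem_append] at hx ⊢; tauto))
  | topR => intro Δ s; exact G3.topR
  | andR _ _ ih1 ih2 => intro Δ s; exact G3.andR (ih1 s) (ih2 s)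
  | andL1 m _ ih =>
      intro Δ s
      exact G3.andL1 (s _ m) (ih (by intro x hx; simp only [List.mem_cons, List.mem_append] at hx ⊢; tauto))
  | andL2 m _ ih =>
      intro Δ s
      exact G3.andL2 (s _ m) (ih (by intro x hx; simp only [List.mem_cons, List.mem_append] at hx ⊢; tauto))
  | impR _ ih =>
      intro Δ s
      exact G3.impR (ih (by intro x hx; simp only [List.mem_cons, List.mem_append] at hx ⊢; tauto))
  | impL m _ _ ih1 ih2 =>
      intro Δ s
      exact G3.impL (s _ m) (ih1 s) (ih2 (by intro x hx; simp only [List.mem_cons, List.mem_append] at hx ⊢; tauto))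

theorem psi_of {Ψ : List UProp} : ∀ {Γ : List UProp} {Q : UProp},
    G3 (Ψ ++ Γ) Q → G3Psi Γ Ψ Q := by
  induction Ψ with
  | nil => intro Γ Q h; exact G3Psi.nil h
  | cons P Ψ ih =>
      intro Γ Q h
      exact G3Psi.cons (ih (g3_weak h (by intro x hx; simp only [List.mem_cons, List.mem_append] at hx ⊢; tauto)))

/- Motives -/
def MR (Γ : Ctx) (A : PProp) : Prop :=
  Ctx.suspNormal Γ → G3 (eraseCtx Γ) (eraseP A)
def MI (Γ : Ctx) (Ω : List PProp) (U : Succ) : Prop :=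
  Ctx.suspNormal Γ → Succ.suspNormal U →
    G3 (Ω.map eraseP ++ eraseCtx Γ) (eraseSucc U)
def ML (Γ : Ctx) (A : NProp) (U : Succ) : Prop :=
  Ctx.suspNormal Γ → Succ.suspNormal U →
    G3 (eraseN A :: eraseCtx Γ) (eraseSucc U)

theorem suspNormal_tail {h : Hyp} {Γ : Ctx} (H : Ctx.suspNormal (h :: Γ)) :
    Ctx.suspNormal Γ := fun x hx => H x (List.mem_cons_of_mem _ hx)

theorem suspNormal_cons {h : Hyp} {Γ : Ctx} (hh : Hyp.suspNormal h)
    (H : Ctx.suspNormal Γ) : Ctx.suspNormal (h :: Γ) := by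
  intro x hx
  cases hx with
  | head => exact hh
  | tail _ hx => exact H x hx

/- ===== The 24 cases ===== -/

theorem case_idP : ∀ {Γ : Ctx} {A : PProp}, Hyp.susp A ∈ Γ → MR Γ A := by
  intro Γ A mem hs
  have h := hs _ mem
  cases A with
  | atom p =>
      exact G3.init (List.mem_map_of_mem (f := eraseHyp) mem)
  | down B => exact (h : False).elim
  | bot => exact (h : False).elim
  | or B C => exact (h : False).elim
  | top => exact (h : False).elim
  | and B C => exact (h : False).elim

theorem case_downR : ∀ {Γ : Ctx} {A : NProp},
    MI Γ [] (Succ.neg A) → MR Γ (PProp.down A) := by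
  intro Γ A ih hs
  exact ih hs trivial

theorem case_orR1 : ∀ {Γ : Ctx} {A B : PProp}, MR Γ A → MR Γ (PProp.or A B) :=
  fun ih hs => G3.orR1 (ih hs)

theorem case_orR2 : ∀ {Γ : Ctx} {A B : PProp}, MR Γ B → MR Γ (PProp.or A B) :=
  fun ih hs => G3.orR2 (ih hs)

theorem case_topR : ∀ {Γ : Ctx}, MR Γ PProp.top := fun _ => G3.topR

theorem case_andR : ∀ {Γ : Ctx} {A B : PProp},
    MR Γ A → MR Γ B → MR Γ (PProp.and A B) :=
  fun ih1 ih2 hs => G3.andR (ih1 hs) (ih2 hs)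

theorem case_focR : ∀ {Γ : Ctx} {A : PProp}, MR Γ A → MI Γ [] (Succ.pos A) :=
  fun ih hs _ => ih hs

theorem case_focL : ∀ {Γ : Ctx} {A : NProp} {U : Succ},
    Hyp.neg A ∈ Γ → Succ.stable U → ML Γ A U → MI Γ [] U := by
  intro Γ A U mem _ ih hs hu
  have h := ih hs hu
  exact g3_weak h (by
    intro x hx
    cases hx with
    | head => exact List.mem_map_of_mem (f := eraseHyp) mem
    | tail _ hx => exact hx)

theorem case_etaP : ∀ {Γ : List Hyp} {p : ℕ} {Ω : List PProp} {U : Succ},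
    MI (Hyp.susp (PProp.atom p) :: Γ) Ω U → MI Γ (PProp.atom p :: Ω) U := by
  intro Γ p Ω U ih hs hu
  have h := ih (suspNormal_cons trivial hs) hu
  exact g3_weak h (by
    intro x hx
    simp only [eraseCtx, List.map_cons, List.mem_append, List.mem_cons,
      eraseHyp, eraseP, List.cons_append] at hx ⊢
    tauto)

theorem case_downL : ∀ {Γ : List Hyp} {A : NProp} {Ω : List PProp} {U : Succ},
    MI (Hyp.neg A :: Γ) Ω U → MI Γ (PProp.down A :: Ω) U := by
  intro Γ A Ω U ih hs hu
  have h := ih (suspNormal_cons trivial hs) hu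
  exact g3_weak h (by
    intro x hx
    simp only [eraseCtx, List.map_cons, List.mem_append, List.mem_cons,
      eraseHyp, eraseP, List.cons_append] at hx ⊢
    tauto)

theorem case_botL : ∀ {Γ : Ctx} {Ω : List PProp} {U : Succ},
    MI Γ (PProp.bot :: Ω) U := by
  intro Γ Ω U _ _
  exact G3.botL (by simp [eraseP])

theorem case_orL : ∀ {Γ : Ctx} {A B : PProp} {Ω : List PProp} {U : Succ},
    MI Γ (A :: Ω) U → MI Γ (B :: Ω) U → MI Γ (PProp.or A B :: Ω) U := by
  intro Γ A B Ω U ih1 ih2 hs hu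
  have h1 := ih1 hs hu
  have h2 := ih2 hs hu
  simp only [List.map_cons, List.cons_append, eraseP] at *
  exact G3.orL (List.mem_cons_self)
    (g3_weak h1 (by intro x hx; simp only [List.mem_cons, List.mem_append] at hx ⊢; tauto))
    (g3_weak h2 (by intro x hx; simp only [List.mem_cons, List.mem_append] at hx ⊢; tauto))

theorem case_topPL : ∀ {Γ : Ctx} {Ω : List PProp} {U : Succ},
    MI Γ Ω U → MI Γ (PProp.top :: Ω) U := by
  intro Γ Ω U ih hs hu
  exact g3_weak (ih hs hu) (by intro x hx; simp only [List.mem_cons, List.mem_append] at hx ⊢; tauto)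

theorem case_andPL : ∀ {Γ : Ctx} {A B : PProp} {Ω : List PProp} {U : Succ},
    MI Γ (A :: B :: Ω) U → MI Γ (PProp.and A B :: Ω) U := by
  intro Γ A B Ω U ih hs hu
  have h := ih hs hu
  simp only [List.map_cons, List.cons_append, eraseP] at *
  refine G3.andL1 (List.mem_cons_self) ?_
  refine G3.andL2 (A := eraseP A) (B := eraseP B) (by simp) ?_
  exact g3_weak h (by intro x hx; simp only [List.mem_cons, List.mem_append] at hx ⊢; tauto)

theorem case_etaN : ∀ {Γ : Ctx} {p : ℕ},
    MI Γ [] (Succ.susp (NProp.atom p)) → MI Γ [] (Succ.neg (NProp.atom p)) := by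
  intro Γ p ih hs _
  exact ih hs trivial

theorem case_upR : ∀ {Γ : Ctx} {A : PProp},
    MI Γ [] (Succ.pos A) → MI Γ [] (Succ.neg (NProp.up A)) := by
  intro Γ A ih hs _
  exact ih hs trivial

theorem case_impR : ∀ {Γ : Ctx} {A : PProp} {B : NProp},
    MI Γ [A] (Succ.neg B) → MI Γ [] (Succ.neg (NProp.imp A B)) := by
  intro Γ A B ih hs _
  have h := ih hs trivial
  exact G3.impR h

theorem case_topNR : ∀ {Γ : Ctx}, MI Γ [] (Succ.neg NProp.top) :=
  fun _ _ => G3.topR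

theorem case_andNR : ∀ {Γ : Ctx} {A B : NProp},
    MI Γ [] (Succ.neg A) → MI Γ [] (Succ.neg B) →
      MI Γ [] (Succ.neg (NProp.and A B)) := by
  intro Γ A B ih1 ih2 hs _
  exact G3.andR (ih1 hs trivial) (ih2 hs trivial)

theorem case_idN : ∀ {Γ : Ctx} {A : NProp}, ML Γ A (Succ.susp A) := by
  intro Γ A hs hu
  cases A with
  | atom p => exact G3.init (List.mem_cons_self)
  | up B => exact (hu : False).elim
  | imp B C => exact (hu : False).elim
  | top => exact (hu : False).elim
  | and B C => exact (hu : False).elim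

theorem case_upL : ∀ {Γ : Ctx} {A : PProp} {U : Succ},
    MI Γ [A] U → ML Γ (NProp.up A) U := by
  intro Γ A U ih hs hu
  exact ih hs hu

theorem case_impL : ∀ {Γ : Ctx} {A : PProp} {B : NProp} {U : Succ},
    MR Γ A → ML Γ B U → ML Γ (NProp.imp A B) U := by
  intro Γ A B U ih1 ih2 hs hu
  have h1 := ih1 hs
  have h2 := ih2 hs hu
  show G3 (UProp.imp (eraseP A) (eraseN B) :: eraseCtx Γ) _
  exact G3.impL (List.mem_cons_self)
    (g3_weak h1 (by intro x hx; simp only [List.mem_cons, List.mem_append] at hx ⊢; tauto))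
    (g3_weak h2 (by intro x hx; simp only [List.mem_cons, List.mem_append] at hx ⊢; tauto))

theorem case_andL1 : ∀ {Γ : Ctx} {A B : NProp} {U : Succ},
    ML Γ A U → ML Γ (NProp.and A B) U := by
  intro Γ A B U ih hs hu
  have h := ih hs hu
  show G3 (UProp.and (eraseN A) (eraseN B) :: eraseCtx Γ) _
  exact G3.andL1 (List.mem_cons_self)
    (g3_weak h (by intro x hx; simp only [List.mem_cons, List.mem_append] at hx ⊢; tauto))

theorem case_andL2 : ∀ {Γ : Ctx} {A B : NProp} {U : Succ},
    ML Γ B U → ML Γ (NProp.and A B) U := by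
  intro Γ A B U ih hs hu
  have h := ih hs hu
  show G3 (UProp.and (eraseN A) (eraseN B) :: eraseCtx Γ) _
  exact G3.andL2 (List.mem_cons_self)
    (g3_weak h (by intro x hx; simp only [List.mem_cons, List.mem_append] at hx ⊢; tauto))

theorem defocR {Γ : Ctx} {A : PProp} (h : RFoc Γ A) : MR Γ A :=
  RFoc.rec (motive_1 := fun Γ A _ => MR Γ A)
    (motive_2 := fun Γ Ω U _ => MI Γ Ω U) (motive_3 := fun Γ A U _ => ML Γ A U)
    (fun m => case_idP m) (fun _ ih => case_downR ih)
    (fun _ ih => case_orR1 ih) (fun _ ih => case_orR2 ih)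
    case_topR (fun _ _ ih1 ih2 => case_andR ih1 ih2)
    (fun _ ih => case_focR ih) (fun m st _ ih => case_focL m st ih)
    (fun _ ih => case_etaP ih) (fun _ ih => case_downL ih)
    case_botL (fun _ _ ih1 ih2 => case_orL ih1 ih2)
    (fun _ ih => case_topPL ih) (fun _ ih => case_andPL ih)
    (fun _ ih => case_etaN ih) (fun _ ih => case_upR ih)
    (fun _ ih => case_impR ih) case_topNR
    (fun _ _ ih1 ih2 => case_andNR ih1 ih2)
    case_idN (fun _ ih => case_upL ih)
    (fun _ _ ih1 ih2 => case_impL ih1 ih2)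
    (fun _ ih => case_andL1 ih) (fun _ ih => case_andL2 ih) h

theorem defocI {Γ : Ctx} {Ω : List PProp} {U : Succ} (h : Inv Γ Ω U) : MI Γ Ω U :=
  Inv.rec (motive_1 := fun Γ A _ => MR Γ A)
    (motive_2 := fun Γ Ω U _ => MI Γ Ω U) (motive_3 := fun Γ A U _ => ML Γ A U)
    (fun m => case_idP m) (fun _ ih => case_downR ih)
    (fun _ ih => case_orR1 ih) (fun _ ih => case_orR2 ih)
    case_topR (fun _ _ ih1 ih2 => case_andR ih1 ih2)
    (fun _ ih => case_focR ih) (fun m st _ ih => case_focL m st ih)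
    (fun _ ih => case_etaP ih) (fun _ ih => case_downL ih)
    case_botL (fun _ _ ih1 ih2 => case_orL ih1 ih2)
    (fun _ ih => case_topPL ih) (fun _ ih => case_andPL ih)
    (fun _ ih => case_etaN ih) (fun _ ih => case_upR ih)
    (fun _ ih => case_impR ih) case_topNR
    (fun _ _ ih1 ih2 => case_andNR ih1 ih2)
    case_idN (fun _ ih => case_upL ih)
    (fun _ _ ih1 ih2 => case_impL ih1 ih2)
    (fun _ ih => case_andL1 ih) (fun _ ih => case_andL2 ih) h

theorem defocL {Γ : Ctx} {A : NProp} {U : Succ} (h : LFoc Γ A U) : ML Γ A U :=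
  LFoc.rec (motive_1 := fun Γ A _ => MR Γ A)
    (motive_2 := fun Γ Ω U _ => MI Γ Ω U) (motive_3 := fun Γ A U _ => ML Γ A U)
    (fun m => case_idP m) (fun _ ih => case_downR ih)
    (fun _ ih => case_orR1 ih) (fun _ ih => case_orR2 ih)
    case_topR (fun _ _ ih1 ih2 => case_andR ih1 ih2)
    (fun _ ih => case_focR ih) (fun m st _ ih => case_focL m st ih)
    (fun _ ih => case_etaP ih) (fun _ ih => case_downL ih)
    case_botL (fun _ _ ih1 ih2 => case_orL ih1 ih2)
    (fun _ ih => case_topPL ih) (fun _ ih => case_andPL ih)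
    (fun _ ih => case_etaN ih) (fun _ ih => case_upR ih)
    (fun _ ih => case_impR ih) case_topNR
    (fun _ _ ih1 ih2 => case_andNR ih1 ih2)
    case_idN (fun _ ih => case_upL ih)
    (fun _ _ ih1 ih2 => case_impL ih1 ih2)
    (fun _ ih => case_andL1 ih) (fun _ ih => case_andL2 ih) h

/-- De-focalization (soundness of focusing), in all three sequent forms,
    together with the "in particular" statement for stable sequents. -/
theorem defocalization :
    (∀ (Γ : Ctx) (A : PProp), Ctx.suspNormal Γ →
      RFoc Γ A → G3Psi (eraseCtx Γ) [] (eraseP A)) ∧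
    (∀ (Γ : Ctx) (Ω : List PProp) (U : Succ),
      Ctx.suspNormal Γ → Succ.suspNormal U →
      Inv Γ Ω U → G3Psi (eraseCtx Γ) (Ω.map eraseP) (eraseSucc U)) ∧
    (∀ (Γ : Ctx) (A : NProp) (U : Succ),
      Ctx.suspNormal Γ → Succ.suspNormal U →
      LFoc Γ A U → G3Psi (eraseCtx Γ) [eraseN A] (eraseSucc U)) ∧
    (∀ (Γ : Ctx) (U : Succ), Succ.stable U →
      Ctx.suspNormal Γ → Succ.suspNormal U →
      Inv Γ [] U → G3 (eraseCtx Γ) (eraseSucc U)) := by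
  refine ⟨?_, ?_, ?_, ?_⟩
  · intro Γ A hs h; exact G3Psi.nil (defocR h hs)
  · intro Γ Ω U hs hu h; exact psi_of (defocI h hs hu)
  · intro Γ A U hs hu h; exact psi_of (defocL h hs hu)
  · intro Γ U _ hs hu h; exact defocI h hs hu

end StructuralFocalization
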